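/- Let C be an n × n matrix over ℂ that is diagonalizable with eigenvalues λ₁, …, λₙ, and let M(t) be a k × k matrix with entries in ℂ[t, t⁻¹]. Form the kn × kn matrix M_C(t) obtained from M(t) by replacing each entry p(t) = Σ aᵢ tⁱ with the n × n block Σ aᵢ (tC)ⁱ. Then det M_C(t) = ∏_{j=1}^{n} det M(t λⱼ). -/

import Mathlib

open Matrix LaurentPolynomial Kronecker

/-- Substitution `t ↦ c·t` in a Laurent polynomial: `Σ aₘ tᵐ ↦ Σ aₘ cᵐ tᵐ`. -/
noncomputable def laurentScale (c : ℂ) (p : LaurentPolynomial ℂ) :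
    LaurentPolynomial ℂ :=
  p.coeff.sum fun m a => LaurentPolynomial.C (a * c ^ m) * T m

/-- Let `C` be diagonalizable with eigenvalues `λ₁, …, λₙ` (and invertible, so
that negative powers make sense) and `M(t)` a `k × k` matrix over `ℂ[t,t⁻¹]`.
The `kn × kn` matrix `M_C(t)`, obtained by replacing each entry `Σ aₘ tᵐ` by
the block `Σ aₘ (tC)ᵐ`, satisfies `det M_C(t) = ∏ⱼ det M(t λⱼ)`. -/
theorem stmt12 {n k : ℕ} (C P : Matrix (Fin n) (Fin n) ℂ) (lam : Fin n → ℂ)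
    (hP : IsUnit P) (hdiag : C = P * Matrix.diagonal lam * P⁻¹)
    (hC : IsUnit C)
    (M : Matrix (Fin k) (Fin k) (LaurentPolynomial ℂ)) :
    Matrix.det (Matrix.of fun p q : Fin k × Fin n =>
        (M p.1 q.1).coeff.sum fun m a =>
          LaurentPolynomial.C
            (a * (((hC.unit ^ m : (Matrix (Fin n) (Fin n) ℂ)ˣ) :
              Matrix (Fin n) (Fin n) ℂ) p.2 q.2)) * T m) =
      ∏ j : Fin n,
        Matrix.det (Matrix.of fun p q : Fin k => laurentScale (lam j) (M p q)) := by
  classical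
  have hPdet : IsUnit P.det := (Matrix.isUnit_iff_isUnit_det P).mp hP
  have hPP : P * P⁻¹ = 1 := Matrix.mul_nonsing_inv P hPdet
  have hPP' : P⁻¹ * P = 1 := Matrix.nonsing_inv_mul P hPdet
  have hPinvU : IsUnit P⁻¹ := isUnit_nonsing_inv_iff.mpr hP
  have hD : IsUnit (Matrix.diagonal lam) := by
    have : Matrix.diagonal lam = P⁻¹ * C * P := by
      rw [hdiag]; rw [Matrix.mul_assoc, Matrix.mul_assoc, hPP', Matrix.mul_one,
        ← Matrix.mul_assoc, hPP', Matrix.one_mul]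
    rw [this]; exact (hPinvU.mul hC).mul hP
  have hlam : ∀ j, lam j ≠ 0 := by
    intro j hj
    have := (Matrix.isUnit_iff_isUnit_det _).mp hD
    rw [Matrix.det_diagonal] at this
    have h0 : ∏ i, lam i ≠ 0 := this.ne_zero
    exact h0 (Finset.prod_eq_zero (Finset.mem_univ j) hj)
  -- the key: every integer power of `C` is `P * diagonal (lam ^ m) * P⁻¹`
  have key : ∀ m : ℤ,
      ((hC.unit ^ m : (Matrix (Fin n) (Fin n) ℂ)ˣ) : Matrix (Fin n) (Fin n) ℂ)
        = P * Matrix.diagonal (fun j => lam j ^ m) * P⁻¹ := by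
    have hCu : hC.unit = hP.unit * hD.unit * hP.unit⁻¹ := by
      apply Units.ext
      simp only [Units.val_mul, IsUnit.unit_spec, Matrix.coe_units_inv]
      exact hdiag
    intro m
    have conj : hC.unit ^ m = hP.unit * hD.unit ^ m * hP.unit⁻¹ := by
      rw [hCu]
      rw [show hP.unit * hD.unit * hP.unit⁻¹ = (MulAut.conj hP.unit) hD.unit from rfl,
        ← map_zpow]
      rfl
    have hdm : ((hD.unit ^ m : (Matrix (Fin n) (Fin n) ℂ)ˣ) : Matrix (Fin n) (Fin n) ℂ)
        = Matrix.diagonal (fun j => lam j ^ m) := by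
      cases m with
      | ofNat l =>
          simp only [Int.ofNat_eq_coe, zpow_natCast, Units.val_pow_eq_pow_val,
            IsUnit.unit_spec, Matrix.diagonal_pow]
          rfl
      | negSucc l =>
          rw [zpow_negSucc, ← inv_pow, Units.val_pow_eq_pow_val, Matrix.coe_units_inv,
            IsUnit.unit_spec]
          have hDinv : (Matrix.diagonal lam)⁻¹ = Matrix.diagonal (fun j => (lam j)⁻¹) := by
            apply Matrix.inv_eq_left_inv
            rw [Matrix.diagonal_mul_diagonal]
            have : (fun j => (lam j)⁻¹ * lam j) = fun _ => (1 : ℂ) := by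
              funext j; exact inv_mul_cancel₀ (hlam j)
            rw [this, Matrix.diagonal_one]
          rw [hDinv, Matrix.diagonal_pow]
          have : (fun j => (lam j)⁻¹) ^ (l+1) = fun j => lam j ^ Int.negSucc l := by
            funext j
            rw [Pi.pow_apply, inv_pow, ← zpow_negSucc]
          rw [this]
    rw [conj, Units.val_mul, Units.val_mul, hdm, IsUnit.unit_spec,
      Matrix.coe_units_inv, hP.unit_spec]
  -- conjugating matrices over the Laurent polynomial ring
  set A : Matrix (Fin k × Fin n) (Fin k × Fin n) (LaurentPolynomial ℂ) :=
    (1 : Matrix (Fin k) (Fin k) (LaurentPolynomial ℂ)) ⊗ₖ (P.map LaurentPolynomial.C) with hA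
  set B : Matrix (Fin k × Fin n) (Fin k × Fin n) (LaurentPolynomial ℂ) :=
    (1 : Matrix (Fin k) (Fin k) (LaurentPolynomial ℂ)) ⊗ₖ ((P⁻¹).map LaurentPolynomial.C) with hB
  set N : Matrix (Fin k × Fin n) (Fin k × Fin n) (LaurentPolynomial ℂ) :=
    Matrix.blockDiagonal (fun j => (M.map (laurentScale (lam j)))) with hN
  have hAB : A * B = 1 := by
    rw [hA, hB, ← Matrix.mul_kronecker_mul, Matrix.one_mul,
      ← Matrix.map_mul, hPP, Matrix.map_one _ (map_zero _) (map_one _),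
      Matrix.one_kronecker_one]
  have hmain : (Matrix.of fun p q : Fin k × Fin n =>
        (M p.1 q.1).coeff.sum fun m a =>
          LaurentPolynomial.C
            (a * (((hC.unit ^ m : (Matrix (Fin n) (Fin n) ℂ)ˣ) :
              Matrix (Fin n) (Fin n) ℂ) p.2 q.2)) * T m) = A * N * B := by
    apply Matrix.ext
    rintro ⟨p1, p2⟩ ⟨q1, q2⟩
    have hRHS : (A * N * B) (p1, p2) (q1, q2)
        = ∑ j, LaurentPolynomial.C (P p2 j) * laurentScale (lam j) (M p1 q1) *
            LaurentPolynomial.C (P⁻¹ j q2) := by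
      simp [hA, hB, hN, Matrix.mul_apply, Fintype.sum_prod_type, Matrix.one_apply,
        Matrix.blockDiagonal_apply, ite_mul, mul_ite, Finset.sum_ite_eq,
        Finset.sum_ite_eq', Finset.mul_sum, Finset.sum_mul, mul_assoc]
    rw [hRHS, Matrix.of_apply]
    have hmul : ∀ (d : Fin n → ℂ), (P * Matrix.diagonal d * P⁻¹) p2 q2
        = ∑ j, P p2 j * d j * P⁻¹ j q2 := by
      intro d
      simp [Matrix.mul_apply, Matrix.diagonal_apply, ite_mul, mul_ite,
        Finset.sum_ite_eq, Finset.sum_ite_eq']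
    simp only [laurentScale, Finsupp.sum, Finset.sum_mul, Finset.mul_sum]
    rw [Finset.sum_comm]
    refine Finset.sum_congr rfl fun m hm => ?_
    rw [key m, hmul, Finset.mul_sum, map_sum, Finset.sum_mul]
    refine Finset.sum_congr rfl fun j _ => ?_
    simp only [_root_.map_mul]
    ring
  rw [hmain, Matrix.det_mul, Matrix.det_mul]
  have : A.det * N.det * B.det = N.det * (A * B).det := by
    rw [Matrix.det_mul]; ring
  rw [this, hAB, Matrix.det_one, mul_one, hN, Matrix.det_blockDiagonal]
  rfl
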